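/- Let H be a finite-dimensional Hopf algebra over a field k with bijective antipode S. Let t ∈ H be a nonzero left integral, let α : H → k be an algebra homomorphism satisfying t·h = α(h)·t for all h ∈ H, and let Λ : H → k be a linear functional with Λ(t₁)·t₂ = 1. If h ∈ H and h⁎ : H → k satisfy h = h⁎(t₁)·t₂, then for all x ∈ H one has h⁎(x) = Λ(S(h)·x), and also h⁎(x) = α(h₂)·Λ(x·S⁻¹(h₁)). -/

import Mathlib

/-!
Helper definitions for Sweedler-notation expressions in a Hopf algebra `H` over a field `k`.
-/

open TensorProduct

variable {k H : Type*} [Field k] [Ring H] [HopfAlgebra k H]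

/-- `swl f h = f(h₁) • h₂` in Sweedler notation. -/
noncomputable def swl (f : H →ₗ[k] k) : H →ₗ[k] H :=
  (TensorProduct.lid k H).toLinearMap ∘ₗ (f.rTensor H) ∘ₗ Coalgebra.comul

/-- `swr f h = f(h₂) • h₁` in Sweedler notation. -/
noncomputable def swr (f : H →ₗ[k] k) : H →ₗ[k] H :=
  (TensorProduct.rid k H).toLinearMap ∘ₗ (f.lTensor H) ∘ₗ Coalgebra.comul

/-- `sw2 f g h = f(h₁) * g(h₂)`, an element of `H`, in Sweedler notation. -/
noncomputable def sw2 (f g : H →ₗ[k] H) : H →ₗ[k] H :=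
  (LinearMap.mul' k H) ∘ₗ (TensorProduct.map f g) ∘ₗ Coalgebra.comul

/-- `sw2k f g h = f(h₁) * g(h₂)`, a scalar, in Sweedler notation. -/
noncomputable def sw2k (f g : H →ₗ[k] k) : H →ₗ[k] k :=
  (LinearMap.mul' k k) ∘ₗ (TensorProduct.map f g) ∘ₗ Coalgebra.comul

/-- `comul3 h = (h₁ ⊗ h₂) ⊗ h₃`, the iterated comultiplication `(Δ ⊗ id)Δ`. -/
noncomputable def comul3 : H →ₗ[k] (H ⊗[k] H) ⊗[k] H :=
  (LinearMap.rTensor H Coalgebra.comul) ∘ₗ Coalgebra.comul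

/-- `sw3 f g e h = f(h₁) * g(h₂) * e(h₃)`, an element of `H`, in Sweedler notation. -/
noncomputable def sw3 (f g e : H →ₗ[k] H) : H →ₗ[k] H :=
  (LinearMap.mul' k H) ∘ₗ
    (TensorProduct.map ((LinearMap.mul' k H) ∘ₗ TensorProduct.map f g) e) ∘ₗ comul3


section AuxHopf
open Coalgebra LinearMap
local notation "Cm" => Coalgebra.comul (R := k) (A := H)
local notation "ε" => Coalgebra.counit (R := k) (A := H)
local notation "𝒮" => HopfAlgebra.antipode (R := k) (A := H)
local notation "μ" => LinearMap.mul' k H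

lemma sum_counit_smul_right {a : H} (r : Repr k a (H × H)) :
    ∑ i ∈ r.index, ε (r.left i) • r.right i = a := by
  have := sum_counit_tmul_eq r
  apply_fun (TensorProduct.lid k H) at this
  rw [map_sum] at this
  simp only [lid_tmul] at this
  simpa using this

lemma sum_counit_smul_left {a : H} (r : Repr k a (H × H)) :
    ∑ i ∈ r.index, ε (r.right i) • r.left i = a := by
  have := sum_tmul_counit_eq r
  apply_fun (TensorProduct.rid k H) at this
  rw [map_sum] at this
  simp only [rid_tmul] at this
  simpa using this

lemma counit_antipode (a : H) : ε (𝒮 a) = ε a := by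
  have h1 := HopfAlgebra.sum_antipode_mul_eq_algebraMap_counit (R := k) (ℛ k a)
  have h2 := congrArg ε h1
  rw [map_sum] at h2
  have h3 : ∀ i ∈ (ℛ k a).index, ε (𝒮 ((ℛ k a).left i) * (ℛ k a).right i)
      = ε (𝒮 ((ℛ k a).left i)) * ε ((ℛ k a).right i) := fun i _ => Bialgebra.counit_mul _ _
  rw [Finset.sum_congr rfl h3] at h2
  have h4 : ε (𝒮 a) = ∑ i ∈ (ℛ k a).index, ε (𝒮 ((ℛ k a).left i)) * ε ((ℛ k a).right i) := by
    conv_lhs => rw [← sum_counit_smul_left (ℛ k a)]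
    rw [map_sum, map_sum]
    refine Finset.sum_congr rfl fun i _ => ?_
    rw [map_smul, map_smul, smul_eq_mul, mul_comm]
  rw [h4, h2]
  simp [Algebra.algebraMap_eq_smul_one]

/-- regrouping helper -/
lemma regroup {M : Type*} [AddCommMonoid M] [Module k M] {a : H} (r : Repr k a (H × H))
    (a₁ : (i : H × H) → Repr k (r.left i) (H × H)) (a₂ : (i : H × H) → Repr k (r.right i) (H × H))
    (Φ : H ⊗[k] (H ⊗[k] H) →ₗ[k] M) :
    ∑ i ∈ r.index, ∑ j ∈ (a₁ i).index,
      Φ ((a₁ i).left j ⊗ₜ[k] ((a₁ i).right j ⊗ₜ[k] r.right i))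
    = ∑ i ∈ r.index, ∑ j ∈ (a₂ i).index,
      Φ (r.left i ⊗ₜ[k] ((a₂ i).left j ⊗ₜ[k] (a₂ i).right j)) := by
  have := sum_tmul_tmul_eq r a₁ a₂
  apply_fun Φ at this
  simpa only [map_sum] using this

lemma comul_mul_comul (t : H) (htl : ∀ b : H, b * t = ε b • t) (b : H) :
    Cm b * Cm t = ε b • Cm t := by
  rw [← Bialgebra.comul_mul, htl b, map_smul]

/-- `t₁ ⊗ a t₂ = S(a) t₁ ⊗ t₂` -/
lemma star_lemma (t : H) (htl : ∀ b : H, b * t = ε b • t) (rt : Repr k t (H × H)) (a : H) :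
    ∑ j ∈ rt.index, rt.left j ⊗ₜ[k] (a * rt.right j)
      = ∑ j ∈ rt.index, (𝒮 a * rt.left j) ⊗ₜ[k] rt.right j := by
  classical
  set r := ℛ k a with hr
  set r1 : (i : H × H) → Repr k (r.left i) (H × H) := fun i => ℛ k (r.left i) with hr1
  set r2 : (i : H × H) → Repr k (r.right i) (H × H) := fun i => ℛ k (r.right i) with hr2
  set Φ : {j // j ∈ rt.index} → (H ⊗[k] (H ⊗[k] H) →ₗ[k] H ⊗[k] H) := fun j =>
    (TensorProduct.map
      ((LinearMap.mulRight k (rt.left j)) ∘ₗ μ ∘ₗ (LinearMap.rTensor H 𝒮))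
      (LinearMap.mulRight k (rt.right j)))
    ∘ₗ (TensorProduct.assoc k H H H).symm.toLinearMap with hΦ
  have hΦapp : ∀ (j) (u v w : H),
      Φ j (u ⊗ₜ (v ⊗ₜ w)) = (𝒮 u * v * rt.left j) ⊗ₜ[k] (w * rt.right j) := by
    intro j u v w
    simp [hΦ, mul_assoc]
  set Φt : H ⊗[k] (H ⊗[k] H) →ₗ[k] H ⊗[k] H := ∑ j ∈ rt.index.attach, Φ j with hΦt
  have hΦtapp : ∀ z, Φt z = ∑ j ∈ rt.index.attach, Φ j z := by
    intro z; rw [hΦt, LinearMap.coe_sum, Finset.sum_apply]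
  -- step 1
  have h1 : ∑ j ∈ rt.index, rt.left j ⊗ₜ[k] (a * rt.right j)
      = ∑ i ∈ r.index, ∑ l ∈ (r1 i).index,
          Φt ((r1 i).left l ⊗ₜ[k] ((r1 i).right l ⊗ₜ[k] r.right i)) := by
    have key : ∀ i ∈ r.index,
        ∑ l ∈ (r1 i).index,
          Φt ((r1 i).left l ⊗ₜ[k] ((r1 i).right l ⊗ₜ[k] r.right i))
        = ∑ j ∈ rt.index, rt.left j ⊗ₜ[k] ((ε (r.left i) • r.right i) * rt.right j) := by
      intro i _
      simp only [hΦtapp]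
      rw [Finset.sum_comm]
      rw [← Finset.sum_attach rt.index
        (fun j => rt.left j ⊗ₜ[k] ((ε (r.left i) • r.right i) * rt.right j))]
      refine Finset.sum_congr rfl fun j _ => ?_
      have e1 : ∑ l ∈ (r1 i).index, Φ j ((r1 i).left l ⊗ₜ[k] ((r1 i).right l ⊗ₜ[k] r.right i))
          = ((∑ l ∈ (r1 i).index, 𝒮 ((r1 i).left l) * (r1 i).right l) * rt.left (j:H × H))
              ⊗ₜ[k] (r.right i * rt.right (j:H × H)) := by
        rw [Finset.sum_mul, sum_tmul]
        exact Finset.sum_congr rfl fun l _ => hΦapp j _ _ _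
      rw [e1, HopfAlgebra.sum_antipode_mul_eq_smul (r1 i), smul_mul_assoc, one_mul,
        smul_tmul, smul_mul_assoc]
    rw [Finset.sum_congr rfl key, Finset.sum_comm]
    refine Finset.sum_congr rfl fun j _ => ?_
    rw [← tmul_sum]
    congr 1
    rw [← Finset.sum_mul]
    congr 1
    exact (sum_counit_smul_right r).symm
  -- step 2 : regroup
  have h2 := regroup (k := k) (H := H) (M := H ⊗[k] H) r r1 r2 Φt
  rw [h1, h2]
  -- step 3 : collapse the right-hand grouping
  have key2 : ∀ i ∈ r.index,
      ∑ m ∈ (r2 i).index, Φt (r.left i ⊗ₜ[k] ((r2 i).left m ⊗ₜ[k] (r2 i).right m))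
      = ε (r.right i) • ∑ j ∈ rt.index, (𝒮 (r.left i) * rt.left j) ⊗ₜ[k] rt.right j := by
    intro i _
    simp only [hΦtapp]
    have e2 : ∀ m ∈ (r2 i).index,
        ∑ j ∈ rt.index.attach, Φ j (r.left i ⊗ₜ[k] ((r2 i).left m ⊗ₜ[k] (r2 i).right m))
        = (𝒮 (r.left i) ⊗ₜ[k] (1:H)) *
            (((r2 i).left m ⊗ₜ[k] (r2 i).right m) * Cm t) := by
      intro m _
      rw [← rt.eq, Finset.mul_sum, Finset.mul_sum,
        ← Finset.sum_attach rt.index (fun j => (𝒮 (r.left i) ⊗ₜ[k] (1:H)) *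
          (((r2 i).left m ⊗ₜ[k] (r2 i).right m) * (rt.left j ⊗ₜ[k] rt.right j)))]
      refine Finset.sum_congr rfl fun j _ => ?_
      rw [hΦapp j, Algebra.TensorProduct.tmul_mul_tmul, Algebra.TensorProduct.tmul_mul_tmul,
        one_mul, mul_assoc]
    rw [Finset.sum_congr rfl e2, ← Finset.mul_sum, ← Finset.sum_mul, (r2 i).eq,
      comul_mul_comul t htl, mul_smul_comm, ← rt.eq, Finset.mul_sum, Finset.smul_sum]
    rw [← Finset.smul_sum]
    congr 1
    refine Finset.sum_congr rfl fun j _ => ?_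
    rw [Algebra.TensorProduct.tmul_mul_tmul, one_mul]
  rw [Finset.sum_congr rfl key2]
  have push : ∀ i ∈ r.index,
      ε (r.right i) • ∑ j ∈ rt.index, (𝒮 (r.left i) * rt.left j) ⊗ₜ[k] rt.right j
      = ∑ j ∈ rt.index, ((ε (r.right i) • 𝒮 (r.left i)) * rt.left j) ⊗ₜ[k] rt.right j := by
    intro i _
    rw [Finset.smul_sum]
    exact Finset.sum_congr rfl fun j _ => by rw [smul_tmul', smul_mul_assoc]
  rw [Finset.sum_congr rfl push, Finset.sum_comm]
  refine Finset.sum_congr rfl fun j _ => ?_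
  have : ∀ i ∈ r.index, ((ε (r.right i) • 𝒮 (r.left i)) * rt.left j) ⊗ₜ[k] rt.right j
      = (ε (r.right i) • 𝒮 (r.left i)) ⊗ₜ[k] (1:H) * (rt.left j ⊗ₜ[k] rt.right j) := by
    intro i _; rw [Algebra.TensorProduct.tmul_mul_tmul, one_mul]
  rw [Finset.sum_congr rfl this, ← Finset.sum_mul, ← sum_tmul]
  rw [Algebra.TensorProduct.tmul_mul_tmul, one_mul]
  congr 2
  conv_rhs => rw [← sum_counit_smul_left r]
  rw [map_sum]
  exact Finset.sum_congr rfl fun i _ => (map_smul 𝒮 _ _).symm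

/-- `Λ(S(a) t₁) • t₂ = a` -/
lemma twostar (t : H) (htl : ∀ b : H, b * t = ε b • t) (rt : Repr k t (H × H)) (Λ : H →ₗ[k] k)
    (hone : ∑ j ∈ rt.index, Λ (rt.left j) • rt.right j = 1) (a : H) :
    ∑ j ∈ rt.index, Λ (𝒮 a * rt.left j) • rt.right j = a := by
  have h2 := congrArg (fun z => (TensorProduct.lid k H) (LinearMap.rTensor H Λ z))
    (star_lemma t htl rt a)
  simp only [map_sum, rTensor_tmul, lid_tmul] at h2
  rw [← h2]
  have : ∀ j ∈ rt.index, Λ (rt.left j) • (a * rt.right j)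
      = a * (Λ (rt.left j) • rt.right j) := fun j _ => (mul_smul_comm _ _ _).symm
  rw [Finset.sum_congr rfl this, ← Finset.mul_sum, hone, mul_one]

noncomputable def theta (α : H →ₐ[k] k) : H →ₗ[k] H :=
  μ ∘ₗ (TensorProduct.map (Algebra.linearMap k H ∘ₗ α.toLinearMap) 𝒮) ∘ₗ Cm

lemma theta_repr (α : H →ₐ[k] k) (g : H) (r : Repr k g (H × H)) :
    theta α g = ∑ i ∈ r.index, α (r.left i) • 𝒮 (r.right i) := by
  rw [theta, LinearMap.comp_apply, LinearMap.comp_apply, ← r.eq, map_sum, map_sum]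
  refine Finset.sum_congr rfl fun i _ => ?_
  simp [Algebra.smul_def]

lemma comul_t_mul (t : H) (α : H →ₐ[k] k) (hα : ∀ b : H, t * b = α b • t) (b : H) :
    Cm t * Cm b = α b • Cm t := by
  rw [← Bialgebra.comul_mul, hα b, map_smul]

/-- `t₁ g ⊗ t₂ = α(g₁) • (t₁ ⊗ t₂ S(g₂))` -/
lemma threestar (t : H) (α : H →ₐ[k] k) (hα : ∀ b : H, t * b = α b • t)
    (rt : Repr k t (H × H)) (g : H) :
    ∑ j ∈ rt.index, (rt.left j * g) ⊗ₜ[k] rt.right j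
      = ∑ i ∈ (ℛ k g).index, α ((ℛ k g).left i) •
          ∑ j ∈ rt.index, rt.left j ⊗ₜ[k] (rt.right j * 𝒮 ((ℛ k g).right i)) := by
  classical
  set r := ℛ k g with hr
  set r1 : (i : H × H) → Repr k (r.left i) (H × H) := fun i => ℛ k (r.left i) with hr1
  set r2 : (i : H × H) → Repr k (r.right i) (H × H) := fun i => ℛ k (r.right i) with hr2
  set Φ : {j // j ∈ rt.index} → (H ⊗[k] (H ⊗[k] H) →ₗ[k] H ⊗[k] H) := fun j =>
    TensorProduct.map (LinearMap.mulLeft k (rt.left j))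
      ((LinearMap.mulLeft k (rt.right j)) ∘ₗ μ ∘ₗ (LinearMap.lTensor H 𝒮)) with hΦ
  have hΦapp : ∀ (j) (u v w : H),
      Φ j (u ⊗ₜ (v ⊗ₜ w)) = (rt.left j * u) ⊗ₜ[k] (rt.right j * (v * 𝒮 w)) := by
    intro j u v w
    simp [hΦ]
  set Φt : H ⊗[k] (H ⊗[k] H) →ₗ[k] H ⊗[k] H := ∑ j ∈ rt.index.attach, Φ j with hΦt
  have hΦtapp : ∀ z, Φt z = ∑ j ∈ rt.index.attach, Φ j z := by
    intro z; rw [hΦt, LinearMap.coe_sum, Finset.sum_apply]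
  have h1 : ∑ j ∈ rt.index, (rt.left j * g) ⊗ₜ[k] rt.right j
      = ∑ i ∈ r.index, ∑ m ∈ (r2 i).index,
          Φt (r.left i ⊗ₜ[k] ((r2 i).left m ⊗ₜ[k] (r2 i).right m)) := by
    have key : ∀ i ∈ r.index,
        ∑ m ∈ (r2 i).index, Φt (r.left i ⊗ₜ[k] ((r2 i).left m ⊗ₜ[k] (r2 i).right m))
        = ∑ j ∈ rt.index, (rt.left j * (ε (r.right i) • r.left i)) ⊗ₜ[k] rt.right j := by
      intro i _
      simp only [hΦtapp]
      rw [Finset.sum_comm]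
      rw [← Finset.sum_attach rt.index
        (fun j => (rt.left j * (ε (r.right i) • r.left i)) ⊗ₜ[k] rt.right j)]
      refine Finset.sum_congr rfl fun j _ => ?_
      have e1 : ∑ m ∈ (r2 i).index,
          Φ j (r.left i ⊗ₜ[k] ((r2 i).left m ⊗ₜ[k] (r2 i).right m))
          = (rt.left (j : H × H) * r.left i) ⊗ₜ[k]
              (rt.right (j : H × H) * ∑ m ∈ (r2 i).index, (r2 i).left m * 𝒮 ((r2 i).right m)) := by
        rw [Finset.mul_sum, tmul_sum]
        exact Finset.sum_congr rfl fun m _ => hΦapp j _ _ _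
      rw [e1, HopfAlgebra.sum_mul_antipode_eq_smul (r2 i), mul_smul_comm, mul_one,
        tmul_smul, mul_smul_comm, smul_tmul']
    rw [Finset.sum_congr rfl key, Finset.sum_comm]
    refine Finset.sum_congr rfl fun j _ => ?_
    rw [← sum_tmul, ← Finset.mul_sum]
    congr 2
    exact (sum_counit_smul_left r).symm
  rw [h1, ← regroup (k := k) (H := H) (M := H ⊗[k] H) r r1 r2 Φt]
  have key2 : ∀ i ∈ r.index,
      ∑ l ∈ (r1 i).index, Φt ((r1 i).left l ⊗ₜ[k] ((r1 i).right l ⊗ₜ[k] r.right i))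
      = α (r.left i) • ∑ j ∈ rt.index, rt.left j ⊗ₜ[k] (rt.right j * 𝒮 (r.right i)) := by
    intro i _
    simp only [hΦtapp]
    have e2 : ∀ l ∈ (r1 i).index,
        ∑ j ∈ rt.index.attach, Φ j ((r1 i).left l ⊗ₜ[k] ((r1 i).right l ⊗ₜ[k] r.right i))
        = (Cm t * ((r1 i).left l ⊗ₜ[k] (r1 i).right l)) * ((1:H) ⊗ₜ[k] 𝒮 (r.right i)) := by
      intro l _
      rw [← rt.eq, Finset.sum_mul, Finset.sum_mul,
        ← Finset.sum_attach rt.index (fun j => ((rt.left j ⊗ₜ[k] rt.right j) *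
          ((r1 i).left l ⊗ₜ[k] (r1 i).right l)) * ((1:H) ⊗ₜ[k] 𝒮 (r.right i)))]
      refine Finset.sum_congr rfl fun j _ => ?_
      rw [hΦapp j, Algebra.TensorProduct.tmul_mul_tmul, Algebra.TensorProduct.tmul_mul_tmul,
        mul_one, mul_assoc]
    rw [Finset.sum_congr rfl e2, ← Finset.sum_mul, ← Finset.mul_sum, (r1 i).eq,
      comul_t_mul t α hα, smul_mul_assoc, ← rt.eq, Finset.sum_mul, Finset.smul_sum]
    rw [← Finset.smul_sum]
    congr 1
    refine Finset.sum_congr rfl fun j _ => ?_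
    rw [Algebra.TensorProduct.tmul_mul_tmul, mul_one]
  exact Finset.sum_congr rfl key2

/-- `Λ(t₁ g) • t₂ = α(g₁) • S(g₂) = theta α g` -/
lemma fourstar (t : H) (α : H →ₐ[k] k) (hα : ∀ b : H, t * b = α b • t)
    (rt : Repr k t (H × H)) (Λ : H →ₗ[k] k)
    (hone : ∑ j ∈ rt.index, Λ (rt.left j) • rt.right j = 1) (g : H) :
    ∑ j ∈ rt.index, Λ (rt.left j * g) • rt.right j = theta α g := by
  have h2 := congrArg (fun z => (TensorProduct.lid k H) (LinearMap.rTensor H Λ z))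
    (threestar t α hα rt g)
  simp only [map_sum, map_smul, rTensor_tmul, lid_tmul] at h2
  rw [h2, theta_repr α g (ℛ k g)]
  refine Finset.sum_congr rfl fun i _ => ?_
  congr 1
  have : ∀ j ∈ rt.index, Λ (rt.left j) • (rt.right j * 𝒮 ((ℛ k g).right i))
      = (Λ (rt.left j) • rt.right j) * 𝒮 ((ℛ k g).right i) :=
    fun j _ => (smul_mul_assoc _ _ _).symm
  rw [Finset.sum_congr rfl this, ← Finset.sum_mul, hone, one_mul]

noncomputable def gmap : H →ₗ[k] H ⊗[k] H :=
  (TensorProduct.comm k H H).toLinearMap ∘ₗ (TensorProduct.map 𝒮 𝒮) ∘ₗ Cm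

lemma gmap_repr (a : H) (r : Repr k a (H × H)) :
    gmap a = ∑ i ∈ r.index, 𝒮 (r.right i) ⊗ₜ[k] 𝒮 (r.left i) := by
  rw [gmap, LinearMap.comp_apply, LinearMap.comp_apply, ← r.eq, map_sum, map_sum]
  rfl

set_option synthInstance.maxHeartbeats 1000000 in
lemma claim1 (b : H) (r : Repr k b (H × H)) :
    ∑ i ∈ r.index, Cm (r.left i) * gmap (r.right i) = ε b • (1 : H ⊗[k] H) := by
  classical
  set r1 : (i : H × H) → Repr k (r.left i) (H × H) := fun i => ℛ k (r.left i) with hr1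
  set r2 : (i : H × H) → Repr k (r.right i) (H × H) := fun i => ℛ k (r.right i) with hr2
  set Ψ : (H ⊗[k] H) ⊗[k] H →ₗ[k] H ⊗[k] H :=
    LinearMap.mul' k (H ⊗[k] H) ∘ₗ (LinearMap.lTensor (H ⊗[k] H) (gmap)) with hΨ
  have hΨapp : ∀ (T : H ⊗[k] H) (y : H), Ψ (T ⊗ₜ y) = T * gmap y := by
    intro T y; simp [hΨ]
  have h0 : ∑ i ∈ r.index, Cm (r.left i) * gmap (r.right i)
      = Ψ ((Cm).rTensor H (Cm b)) := by
    rw [← r.eq, map_sum, map_sum]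
    exact Finset.sum_congr rfl fun i _ => (hΨapp _ _).symm
  have h1 : (Cm).rTensor H (Cm b)
      = (TensorProduct.assoc k H H H).symm ((Cm).lTensor H (Cm b)) :=
    (Coalgebra.coassoc_symm_apply b).symm
  rw [h0, h1, ← r.eq, map_sum, map_sum, map_sum]
  -- now : Σᵢ Ψ (assoc.symm (xᵢ ⊗ Cm yᵢ))
  have h2 : ∀ i ∈ r.index,
      Ψ ((TensorProduct.assoc k H H H).symm ((LinearMap.lTensor H Cm) (r.left i ⊗ₜ[k] r.right i)))
      = (r.left i * 𝒮 (r.right i)) ⊗ₜ[k] (1 : H) := by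
    intro i _
    rw [LinearMap.lTensor_tmul, ← (r2 i).eq, tmul_sum, map_sum, map_sum]
    have e1 : ∀ m ∈ (r2 i).index,
        Ψ ((TensorProduct.assoc k H H H).symm
            (r.left i ⊗ₜ[k] ((r2 i).left m ⊗ₜ[k] (r2 i).right m)))
        = (r.left i ⊗ₜ[k] (r2 i).left m) * gmap ((r2 i).right m) := by
      intro m _
      rw [TensorProduct.assoc_symm_tmul, hΨapp]
    rw [Finset.sum_congr rfl e1]
    -- set up the per-i trilinear map and regroup
    set Ξ : H ⊗[k] (H ⊗[k] H) →ₗ[k] H ⊗[k] H :=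
      (TensorProduct.comm k H H).toLinearMap ∘ₗ
        (TensorProduct.map (μ ∘ₗ (LinearMap.lTensor H 𝒮))
          ((LinearMap.mulLeft k (r.left i)) ∘ₗ 𝒮)) ∘ₗ
        (TensorProduct.assoc k H H H).symm.toLinearMap with hΞ
    have hΞapp : ∀ u v w : H,
        Ξ (u ⊗ₜ (v ⊗ₜ w)) = (r.left i * 𝒮 w) ⊗ₜ[k] (u * 𝒮 v) := by
      intro u v w; simp [hΞ]
    have e2 : ∀ m ∈ (r2 i).index,
        (r.left i ⊗ₜ[k] (r2 i).left m) * gmap ((r2 i).right m)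
        = ∑ n ∈ (ℛ k ((r2 i).right m)).index,
            Ξ ((r2 i).left m ⊗ₜ[k]
              ((ℛ k ((r2 i).right m)).left n ⊗ₜ[k] (ℛ k ((r2 i).right m)).right n)) := by
      intro m _
      rw [gmap_repr _ (ℛ k ((r2 i).right m)), Finset.mul_sum]
      refine Finset.sum_congr rfl fun n _ => ?_
      rw [hΞapp, Algebra.TensorProduct.tmul_mul_tmul]
    rw [Finset.sum_congr rfl e2,
      ← regroup (k := k) (H := H) (M := H ⊗[k] H) (r2 i) (fun m => ℛ k ((r2 i).left m))
        (fun m => ℛ k ((r2 i).right m)) Ξ]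
    have e3 : ∀ m ∈ (r2 i).index,
        ∑ l ∈ (ℛ k ((r2 i).left m)).index,
          Ξ ((ℛ k ((r2 i).left m)).left l ⊗ₜ[k]
            ((ℛ k ((r2 i).left m)).right l ⊗ₜ[k] (r2 i).right m))
        = ε ((r2 i).left m) • ((r.left i * 𝒮 ((r2 i).right m)) ⊗ₜ[k] (1:H)) := by
      intro m _
      have : ∀ l ∈ (ℛ k ((r2 i).left m)).index,
          Ξ ((ℛ k ((r2 i).left m)).left l ⊗ₜ[k]
            ((ℛ k ((r2 i).left m)).right l ⊗ₜ[k] (r2 i).right m))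
          = (r.left i * 𝒮 ((r2 i).right m)) ⊗ₜ[k]
              ((ℛ k ((r2 i).left m)).left l * 𝒮 ((ℛ k ((r2 i).left m)).right l)) :=
        fun l _ => hΞapp _ _ _
      rw [Finset.sum_congr rfl this, ← tmul_sum,
        HopfAlgebra.sum_mul_antipode_eq_smul (ℛ k ((r2 i).left m)), tmul_smul]
    rw [Finset.sum_congr rfl e3]
    have e4 : ∀ m ∈ (r2 i).index,
        ε ((r2 i).left m) • ((r.left i * 𝒮 ((r2 i).right m)) ⊗ₜ[k] (1:H))
        = (r.left i * 𝒮 (ε ((r2 i).left m) • (r2 i).right m)) ⊗ₜ[k] (1:H) := by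
      intro m _
      rw [map_smul, mul_smul_comm, smul_tmul']
    rw [Finset.sum_congr rfl e4, ← sum_tmul, ← Finset.mul_sum, ← map_sum,
      sum_counit_smul_right (r2 i)]
  rw [Finset.sum_congr rfl h2, ← sum_tmul]
  have : ∑ i ∈ r.index, r.left i * 𝒮 (r.right i) = ε b • 1 :=
    HopfAlgebra.sum_mul_antipode_eq_smul r
  rw [this, Algebra.TensorProduct.one_def, smul_tmul']

lemma comul_antipode (a : H) : Cm (𝒮 a) = gmap a := by
  classical
  set r := ℛ k a with hr
  set r1 : (i : H × H) → Repr k (r.left i) (H × H) := fun i => ℛ k (r.left i) with hr1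
  set r2 : (i : H × H) → Repr k (r.right i) (H × H) := fun i => ℛ k (r.right i) with hr2
  set Θ : H ⊗[k] (H ⊗[k] H) →ₗ[k] H ⊗[k] H :=
    LinearMap.mul' k (H ⊗[k] H) ∘ₗ
      (TensorProduct.map (Cm ∘ₗ 𝒮)
        (LinearMap.mul' k (H ⊗[k] H) ∘ₗ TensorProduct.map Cm (gmap))) with hΘ
  have hΘapp : ∀ u v w : H, Θ (u ⊗ₜ (v ⊗ₜ w)) = Cm (𝒮 u) * (Cm v * gmap w) := by
    intro u v w; simp [hΘ]
  have side2 : ∑ i ∈ r.index, ∑ m ∈ (r2 i).index,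
      Θ (r.left i ⊗ₜ[k] ((r2 i).left m ⊗ₜ[k] (r2 i).right m)) = Cm (𝒮 a) := by
    have e1 : ∀ i ∈ r.index,
        ∑ m ∈ (r2 i).index, Θ (r.left i ⊗ₜ[k] ((r2 i).left m ⊗ₜ[k] (r2 i).right m))
        = Cm (𝒮 (ε (r.right i) • r.left i)) := by
      intro i _
      have : ∀ m ∈ (r2 i).index,
          Θ (r.left i ⊗ₜ[k] ((r2 i).left m ⊗ₜ[k] (r2 i).right m))
          = Cm (𝒮 (r.left i)) * (Cm ((r2 i).left m) * gmap ((r2 i).right m)) :=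
        fun m _ => hΘapp _ _ _
      rw [Finset.sum_congr rfl this, ← Finset.mul_sum, claim1 (r.right i) (r2 i),
        mul_smul_comm, mul_one, map_smul, map_smul]
    rw [Finset.sum_congr rfl e1, ← map_sum, ← map_sum, sum_counit_smul_left r]
  have side1 : ∑ i ∈ r.index, ∑ l ∈ (r1 i).index,
      Θ ((r1 i).left l ⊗ₜ[k] ((r1 i).right l ⊗ₜ[k] r.right i)) = gmap a := by
    have e1 : ∀ i ∈ r.index,
        ∑ l ∈ (r1 i).index, Θ ((r1 i).left l ⊗ₜ[k] ((r1 i).right l ⊗ₜ[k] r.right i))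
        = ε (r.left i) • gmap (r.right i) := by
      intro i _
      have : ∀ l ∈ (r1 i).index,
          Θ ((r1 i).left l ⊗ₜ[k] ((r1 i).right l ⊗ₜ[k] r.right i))
          = (Cm (𝒮 ((r1 i).left l)) * Cm ((r1 i).right l)) * gmap (r.right i) := by
        intro l _
        rw [hΘapp, mul_assoc]
      rw [Finset.sum_congr rfl this, ← Finset.sum_mul]
      have : ∑ l ∈ (r1 i).index, Cm (𝒮 ((r1 i).left l)) * Cm ((r1 i).right l)
          = ε (r.left i) • 1 := by
        have e : ∀ l ∈ (r1 i).index, Cm (𝒮 ((r1 i).left l)) * Cm ((r1 i).right l)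
            = Cm (𝒮 ((r1 i).left l) * (r1 i).right l) := fun l _ =>
          (Bialgebra.comul_mul _ _).symm
        rw [Finset.sum_congr rfl e, ← map_sum, HopfAlgebra.sum_antipode_mul_eq_smul (r1 i),
          map_smul, Bialgebra.comul_one]
      rw [this, smul_mul_assoc, one_mul]
    rw [Finset.sum_congr rfl e1]
    have e5 : ∀ i ∈ r.index, ε (r.left i) • gmap (r.right i)
        = gmap (ε (r.left i) • r.right i) := fun i _ => (map_smul (gmap (k := k) (H := H)) _ _).symm
    rw [Finset.sum_congr rfl e5, ← map_sum, sum_counit_smul_right r]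
  rw [← side1, ← side2, regroup (k := k) (H := H) (M := H ⊗[k] H) r r1 r2 Θ]

section Sinv
variable (S' : H →ₗ[k] H)

lemma comul_S'_repr (hS'l : ∀ x : H, S' (𝒮 x) = x) (hS'r : ∀ x : H, 𝒮 (S' x) = x)
    (x : H) (r : Repr k x (H × H)) :
    Cm (S' x) = ∑ i ∈ r.index, S' (r.right i) ⊗ₜ[k] S' (r.left i) := by
  have h := comul_antipode (k := k) (S' x)
  rw [hS'r] at h
  -- h : Cm x = gmap (S' x)
  set rr := ℛ k (S' x) with hrr
  rw [gmap_repr (k := k) _ rr] at h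
  have happ := congrArg (fun z => (TensorProduct.map S' S')
    ((TensorProduct.comm k H H) z)) h
  simp only [map_sum, TensorProduct.comm_tmul, TensorProduct.map_tmul] at happ
  rw [← r.eq] at happ
  simp only [map_sum, TensorProduct.comm_tmul, TensorProduct.map_tmul] at happ
  rw [happ]
  have : ∀ j ∈ rr.index, S' (𝒮 (rr.left j)) ⊗ₜ[k] S' (𝒮 (rr.right j))
      = rr.left j ⊗ₜ[k] rr.right j := by
    intro j _; rw [hS'l, hS'l]
  rw [Finset.sum_congr rfl this, rr.eq]

lemma counit_S' (hS'r : ∀ x : H, 𝒮 (S' x) = x) (x : H) : ε (S' x) = ε x := by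
  conv_rhs => rw [← hS'r x]
  rw [counit_antipode]

lemma eta_lemma (hS'l : ∀ x : H, S' (𝒮 x) = x) (hS'r : ∀ x : H, 𝒮 (S' x) = x)
    (α : H →ₐ[k] k) (b : H) (r : Repr k b (H × H)) :
    ∑ i ∈ r.index, α (S' (r.left i)) * α (r.right i) = ε b := by
  have key : ∑ i ∈ r.index, r.right i * S' (r.left i) = ε b • 1 := by
    set JL : H ⊗[k] H →ₗ[k] H :=
      μ ∘ₗ (LinearMap.lTensor H S') ∘ₗ (TensorProduct.comm k H H).toLinearMap with hJL
    have hJLapp : ∀ u v : H, JL (u ⊗ₜ v) = v * S' u := by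
      intro u v; simp [hJL]
    have h0 : ∑ i ∈ r.index, r.right i * S' (r.left i) = JL (Cm b) := by
      rw [← r.eq, map_sum]
      exact Finset.sum_congr rfl fun i _ => (hJLapp _ _).symm
    set c := S' b with hc
    have hb : b = 𝒮 c := (hS'r b).symm
    set rc := ℛ k c with hrc
    rw [h0, hb, comul_antipode (k := k) c, gmap_repr (k := k) c rc, map_sum]
    have : ∀ j ∈ rc.index, JL (𝒮 (rc.right j) ⊗ₜ[k] 𝒮 (rc.left j))
        = 𝒮 (rc.left j) * rc.right j := by
      intro j _; rw [hJLapp, hS'l]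
    rw [Finset.sum_congr rfl this, HopfAlgebra.sum_antipode_mul_eq_smul rc]
    have : ε (c : H) = ε (𝒮 c) := (counit_antipode c).symm
    rw [← this, hc, counit_S' S' hS'r]
  have : ∀ i ∈ r.index, α (S' (r.left i)) * α (r.right i)
      = α (r.right i * S' (r.left i)) := by
    intro i _; rw [map_mul, mul_comm]
  rw [Finset.sum_congr rfl this, ← map_sum, key]
  simp [Algebra.smul_def]

lemma theta_S' (hS'l : ∀ x : H, S' (𝒮 x) = x) (hS'r : ∀ x : H, 𝒮 (S' x) = x)
    (α : H →ₐ[k] k) (x : H) (r : Repr k x (H × H)) :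
    theta α (S' x) = ∑ i ∈ r.index, α (S' (r.right i)) • r.left i := by
  rw [theta_repr α (S' x) ⟨r.index, fun i => S' (r.right i), fun i => S' (r.left i),
      (comul_S'_repr S' hS'l hS'r x r).symm⟩]
  exact Finset.sum_congr rfl fun i _ => by
    show α (S' (r.right i)) • 𝒮 (S' (r.left i)) = _
    rw [hS'r]

end Sinv


/-- `H` finite-dimensional Hopf algebra over `k` with bijective antipode
`S` (with linear inverse `S'`), `t ≠ 0` a left integral, `α : H → k` an algebra map with
`t·h = α(h)·t`, `Λ : H → k` with `Λ(t₁)·t₂ = 1`.  If `h = h⁎(t₁)·t₂`, then for all `x`,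
`h⁎(x) = Λ(S(h)·x)` and `h⁎(x) = α(h₂)·Λ(x·S⁻¹(h₁))`. -/
theorem statement1 [FiniteDimensional k H]
    (S' : H →ₗ[k] H)
    (hS'l : ∀ x : H, S' (HopfAlgebra.antipode (R := k) x) = x)
    (hS'r : ∀ x : H, HopfAlgebra.antipode (R := k) (S' x) = x)
    (t : H) (ht0 : t ≠ 0)
    (htl : ∀ h : H, h * t = Coalgebra.counit (R := k) h • t)
    (α : H →ₐ[k] k) (hα : ∀ h : H, t * h = α h • t)
    (Λ : H →ₗ[k] k) (hΛ : swl Λ t = 1)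
    (h : H) (hstar : H →ₗ[k] k) (hh : swl hstar t = h) :
    (∀ x : H, hstar x = Λ (HopfAlgebra.antipode (R := k) h * x)) ∧
    (∀ x : H,
      hstar x = sw2k (Λ ∘ₗ (LinearMap.mulLeft k x) ∘ₗ S') α.toLinearMap h) := by
  classical
  set rt := ℛ k t with hrt
  have swl_repr : ∀ f : H →ₗ[k] k,
      swl f t = ∑ j ∈ rt.index, f (rt.left j) • rt.right j := by
    intro f
    rw [swl, LinearMap.comp_apply, LinearMap.comp_apply, ← rt.eq, map_sum, map_sum]
    simp
  have hone : ∑ j ∈ rt.index, Λ (rt.left j) • rt.right j = 1 := by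
    rw [← swl_repr, hΛ]
  set φ : (H →ₗ[k] k) →ₗ[k] H :=
    ∑ j ∈ rt.index.attach,
      (LinearMap.applyₗ (rt.left (j : H × H))).smulRight (rt.right (j : H × H)) with hφ
  have φapp : ∀ f : H →ₗ[k] k, φ f = ∑ j ∈ rt.index, f (rt.left j) • rt.right j := by
    intro f
    rw [hφ, LinearMap.coe_sum, Finset.sum_apply,
      ← Finset.sum_attach rt.index (fun j => f (rt.left j) • rt.right j)]
    simp
  have hsurj : Function.Surjective φ := by
    intro a
    refine ⟨Λ ∘ₗ LinearMap.mulLeft k (𝒮 a), ?_⟩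
    rw [φapp]
    have := twostar t htl rt Λ hone a
    simpa using this
  have hinj : Function.Injective φ :=
    (LinearMap.injective_iff_surjective_of_finrank_eq_finrank
      (by rw [Subspace.dual_finrank_eq])).2 hsurj
  have hφh : φ hstar = h := by rw [φapp, ← swl_repr, hh]
  have hφ2 : φ (Λ ∘ₗ LinearMap.mulLeft k (𝒮 h)) = h := by
    rw [φapp]
    simpa using twostar t htl rt Λ hone h
  have part1 : hstar = Λ ∘ₗ LinearMap.mulLeft k (𝒮 h) := hinj (hφh.trans hφ2.symm)
  refine ⟨fun x => ?_, fun x => ?_⟩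
  · conv_lhs => rw [part1]
    simp
  · -- part 2
    set rh := ℛ k h with hrh
    set Gm : H →ₗ[k] k := ∑ i ∈ rh.index.attach,
      α (rh.right (i : H × H)) • (Λ ∘ₗ LinearMap.mulRight k (S' (rh.left (i : H × H)))) with hGm
    have Gmapp : ∀ y : H, Gm y
        = ∑ i ∈ rh.index, α (rh.right i) * Λ (y * S' (rh.left i)) := by
      intro y
      rw [hGm, LinearMap.coe_sum, Finset.sum_apply,
        ← Finset.sum_attach rh.index (fun i => α (rh.right i) * Λ (y * S' (rh.left i)))]
      simp
    have goalform : sw2k (Λ ∘ₗ (LinearMap.mulLeft k x) ∘ₗ S') α.toLinearMap h = Gm x := by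
      simp only [sw2k]
      rw [LinearMap.comp_apply, LinearMap.comp_apply, ← rh.eq, map_sum, map_sum, Gmapp]
      refine Finset.sum_congr rfl fun i _ => ?_
      simp [mul_comm]
    have hφG : φ Gm = h := by
      rw [φapp]
      have step1 : ∀ j ∈ rt.index, Gm (rt.left j) • rt.right j
          = ∑ i ∈ rh.index, α (rh.right i) •
              (Λ (rt.left j * S' (rh.left i)) • rt.right j) := by
        intro j _
        rw [Gmapp, Finset.sum_smul]
        exact Finset.sum_congr rfl fun i _ => by rw [mul_smul]
      rw [Finset.sum_congr rfl step1, Finset.sum_comm]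
      have step2 : ∀ i ∈ rh.index,
          ∑ j ∈ rt.index, α (rh.right i) • (Λ (rt.left j * S' (rh.left i)) • rt.right j)
          = α (rh.right i) • theta α (S' (rh.left i)) := by
        intro i _
        rw [← Finset.smul_sum, fourstar t α hα rt Λ hone]
      rw [Finset.sum_congr rfl step2]
      have step3 : ∀ i ∈ rh.index,
          α (rh.right i) • theta α (S' (rh.left i))
          = ∑ l ∈ (ℛ k (rh.left i)).index,
              (α (S' ((ℛ k (rh.left i)).right l)) * α (rh.right i)) •
                (ℛ k (rh.left i)).left l := by
        intro i _
        rw [theta_S' S' hS'l hS'r α (rh.left i) (ℛ k (rh.left i)), Finset.smul_sum]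
        refine Finset.sum_congr rfl fun l _ => ?_
        rw [smul_smul, mul_comm]
      rw [Finset.sum_congr rfl step3]
      set Ω : H ⊗[k] (H ⊗[k] H) →ₗ[k] H :=
        (TensorProduct.rid k H).toLinearMap ∘ₗ
          LinearMap.lTensor H
            (LinearMap.mul' k k ∘ₗ TensorProduct.map (α.toLinearMap ∘ₗ S') α.toLinearMap)
        with hΩ
      have hΩapp : ∀ u v w : H, Ω (u ⊗ₜ (v ⊗ₜ w)) = (α (S' v) * α w) • u := by
        intro u v w; simp [hΩ]
      have regrp := regroup (k := k) (H := H) (M := H) rh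
        (fun i => ℛ k (rh.left i)) (fun i => ℛ k (rh.right i)) Ω
      have lhs_eq : ∑ i ∈ rh.index, ∑ l ∈ (ℛ k (rh.left i)).index,
          (α (S' ((ℛ k (rh.left i)).right l)) * α (rh.right i)) • (ℛ k (rh.left i)).left l
          = ∑ i ∈ rh.index, ∑ l ∈ (ℛ k (rh.left i)).index,
            Ω ((ℛ k (rh.left i)).left l ⊗ₜ[k]
              ((ℛ k (rh.left i)).right l ⊗ₜ[k] rh.right i)) := by
        refine Finset.sum_congr rfl fun i _ => Finset.sum_congr rfl fun l _ => ?_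
        rw [hΩapp]
      rw [lhs_eq, regrp]
      have rhs_eq : ∀ i ∈ rh.index, ∑ m ∈ (ℛ k (rh.right i)).index,
          Ω (rh.left i ⊗ₜ[k]
            ((ℛ k (rh.right i)).left m ⊗ₜ[k] (ℛ k (rh.right i)).right m))
          = ε (rh.right i) • rh.left i := by
        intro i _
        have : ∀ m ∈ (ℛ k (rh.right i)).index,
            Ω (rh.left i ⊗ₜ[k]
              ((ℛ k (rh.right i)).left m ⊗ₜ[k] (ℛ k (rh.right i)).right m))
            = (α (S' ((ℛ k (rh.right i)).left m)) * α ((ℛ k (rh.right i)).right m))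
                • rh.left i := fun m _ => hΩapp _ _ _
        rw [Finset.sum_congr rfl this, ← Finset.sum_smul,
          eta_lemma S' hS'l hS'r α (rh.right i) (ℛ k (rh.right i))]
      rw [Finset.sum_congr rfl rhs_eq, sum_counit_smul_left rh]
    have part2 : hstar = Gm := hinj (hφh.trans hφG.symm)
    rw [goalform, part2]

end AuxHopf
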